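/- For every n ≥ 1 there exists a pushdown automaton with 3n+2 states and two stack symbols whose language, over an alphabet Γ₂ of input letters, is exactly the set of words over Γ₂ of length 2^n (that is, Γ₂^{2^n}); moreover along any accepting run the stack height never exceeds n. -/
import Mathlib


/-- A stack operation of a pushdown automaton. -/
inductive StackOp (Γ : Type*) where
  | push (γ : Γ)
  | pop (γ : Γ)
  | nop

/-- The effect of a stack operation: `op.apply s s'` means performing `op`
on stack `s` yields stack `s'`. -/
def StackOp.apply {Γ : Type*} : StackOp Γ → List Γ → List Γ → Prop
  | .push γ, s, s' => s' = γ :: s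
  | .pop γ, s, s' => s = γ :: s'
  | .nop, s, s' => s' = s

/-- A pushdown automaton with states `Q`, stack symbols `Γ` and input alphabet `σ`.
Transitions read a letter or `ε` (`Option σ`) and perform one stack operation. -/
structure PDA (Q Γ σ : Type*) where
  trans : Set (Q × Option σ × StackOp Γ × Q)
  start : Q
  final : Set Q

/-- `P.Steps c w c' h` : there is a run of `P` from configuration `c` to `c'`
reading the word `w`, whose maximal stack height (over all configurations
of the run, endpoints included) is `h`. -/
inductive PDA.Steps {Q Γ σ : Type*} (P : PDA Q Γ σ) :
    Q × List Γ → List σ → Q × List Γ → ℕ → Prop where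
  | refl (c : Q × List Γ) : PDA.Steps P c [] c c.2.length
  | step {q q' : Q} {a : Option σ} {op : StackOp Γ} {s s' : List Γ}
      {w : List σ} {c : Q × List Γ} {h : ℕ} :
      (q, a, op, q') ∈ P.trans → op.apply s s' →
      PDA.Steps P (q', s') w c h →
      PDA.Steps P (q, s) (a.toList ++ w) c (max s.length h)

/-- The language of a PDA: acceptance by final state and empty stack,
starting from the initial state with empty stack. -/
def PDA.language {Q Γ σ : Type*} (P : PDA Q Γ σ) : Set (List σ) :=
  {w | ∃ f ∈ P.final, ∃ h, P.Steps (P.start, []) w (f, []) h}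

namespace CountingPDA

variable {Q Q' Γ σ : Type*}

theorem steps_start_le {P : PDA Q Γ σ} {c c' : Q × List Γ} {w : List σ} {h : ℕ}
    (hs : P.Steps c w c' h) : c.2.length ≤ h := by
  induction hs with
  | refl c => exact le_rfl
  | step _ _ _ _ => exact le_max_left _ _

theorem steps_trans {P : PDA Q Γ σ} {c c' c'' : Q × List Γ} {w w' : List σ} {h h' : ℕ}
    (h1 : P.Steps c w c' h) (h2 : P.Steps c' w' c'' h') :
    P.Steps c (w ++ w') c'' (max h h') := by
  induction h1 with
  | refl c =>
    have hle := steps_start_le h2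
    simpa [Nat.max_eq_right hle] using h2
  | step ht ha _ ih =>
    have := PDA.Steps.step ht ha (ih h2)
    simpa [Nat.max_assoc] using this

theorem steps_congr {P : PDA Q Γ σ} {c c' : Q × List Γ} {w w' : List σ} {h h' : ℕ}
    (hs : P.Steps c w c' h) (hw : w = w') (hh : h = h') : P.Steps c w' c' h' := by
  subst hw; subst hh; exact hs

theorem comap_steps {P : PDA Q Γ σ} {P' : PDA Q' Γ σ} {g : Q' → Q}
    (ht : ∀ t : Q' × Option σ × StackOp Γ × Q',
      t ∈ P'.trans ↔ (g t.1, t.2.1, t.2.2.1, g t.2.2.2) ∈ P.trans)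
    {c c' : Q' × List Γ} {w : List σ} {h : ℕ} (hs : P'.Steps c w c' h) :
    P.Steps (g c.1, c.2) w (g c'.1, c'.2) h := by
  induction hs with
  | refl c => exact PDA.Steps.refl _
  | step htr ha _ ih => exact PDA.Steps.step ((ht _).mp htr) ha ih

theorem comap_steps_back {P : PDA Q Γ σ} {P' : PDA Q' Γ σ} {g : Q' → Q}
    (ht : ∀ t : Q' × Option σ × StackOp Γ × Q',
      t ∈ P'.trans ↔ (g t.1, t.2.1, t.2.2.1, g t.2.2.2) ∈ P.trans)
    (hsurj : ∀ t ∈ P.trans, ∃ q : Q', g q = t.2.2.2)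
    {c c' : Q × List Γ} {w : List σ} {h : ℕ} (hs : P.Steps c w c' h) :
    ∀ q : Q', g q = c.1 → ∃ q' : Q', g q' = c'.1 ∧ P'.Steps (q, c.2) w (q', c'.2) h := by
  induction hs with
  | refl c =>
    intro q hq
    exact ⟨q, hq, PDA.Steps.refl (q, c.2)⟩
  | step htr ha _ ih =>
    intro q hq
    obtain ⟨q₁, hq₁⟩ := hsurj _ htr
    obtain ⟨q', hq', hsteps⟩ := ih q₁ hq₁
    exact ⟨q', hq', PDA.Steps.step ((ht _).mpr (by rw [hq, hq₁]; exact htr)) ha hsteps⟩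

/-- The PDA over ℕ states: `S k = k` (0..n), `R k = n+1+k` (n+1..2n+1),
`T (k+1) = 2n+2+k` (2n+2..3n+1). -/
def natPDA (n : ℕ) (Γ₂ : Type) : PDA ℕ (Fin 2) Γ₂ where
  trans := {t | (∃ k < n, t = (k + 1, none, .push 0, k))
    ∨ (∃ a : Γ₂, t = (0, some a, .nop, n + 1))
    ∨ (∃ k < n, t = (n + 1 + k, none, .pop 0, 2 * n + 2 + k))
    ∨ (∃ k < n, t = (n + 1 + k, none, .pop 1, n + 2 + k))
    ∨ (∃ k < n, t = (2 * n + 2 + k, none, .push 1, k))}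
  start := n
  final := {2 * n + 1}

def rest : ℕ → List (Fin 2) → ℕ
  | _, [] => 0
  | k, b :: t => (if b = 0 then 2 ^ k else 0) + rest (k + 1) t

theorem complete (n : ℕ) (Γ₂ : Type) (k : ℕ) : k ≤ n → ∀ s : List (Fin 2),
    s.length = n - k → ∀ w : List Γ₂, w.length = 2 ^ k →
    (natPDA n Γ₂).Steps (k, s) w (n + 1 + k, s) n := by
  induction k with
  | zero =>
    intro hk s hs w hw
    obtain ⟨a, rfl⟩ : ∃ a, w = [a] := List.length_eq_one_iff.mp (by simpa using hw)
    have h0 : ((0 : ℕ), some a, StackOp.nop (Γ := Fin 2), (n + 1 : ℕ)) ∈ (natPDA n Γ₂).trans :=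
      Or.inr (Or.inl ⟨a, rfl⟩)
    have := PDA.Steps.step h0 (rfl : StackOp.apply .nop s s) (PDA.Steps.refl (n + 1, s))
    refine steps_congr this (by simp) (by simp [hs])
  | succ k ih =>
    intro hk s hs w hw
    have hkn : k < n := hk
    have hp : (2 : ℕ) ^ (k + 1) = 2 ^ k + 2 ^ k := by rw [pow_succ]; ring
    have hw1 : (w.take (2 ^ k)).length = 2 ^ k := by
      rw [List.length_take]; omega
    have hw2 : (w.drop (2 ^ k)).length = 2 ^ k := by
      rw [List.length_drop]; omega
    have hs0 : ((0 : Fin 2) :: s).length = n - k := by simp [hs]; omega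
    have hs1 : ((1 : Fin 2) :: s).length = n - k := by simp [hs]; omega
    have run1 := ih (le_of_lt hkn) ((0 : Fin 2) :: s) hs0 _ hw1
    have run2 := ih (le_of_lt hkn) ((1 : Fin 2) :: s) hs1 _ hw2
    have t1 : ((k + 1 : ℕ), (none : Option Γ₂), StackOp.push (0 : Fin 2), (k : ℕ)) ∈
        (natPDA n Γ₂).trans := Or.inl ⟨k, hkn, rfl⟩
    have t2 : ((n + 1 + k : ℕ), (none : Option Γ₂), StackOp.pop (0 : Fin 2), (2 * n + 2 + k : ℕ)) ∈
        (natPDA n Γ₂).trans := Or.inr (Or.inr (Or.inl ⟨k, hkn, rfl⟩))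
    have t3 : ((2 * n + 2 + k : ℕ), (none : Option Γ₂), StackOp.push (1 : Fin 2), (k : ℕ)) ∈
        (natPDA n Γ₂).trans := Or.inr (Or.inr (Or.inr (Or.inr ⟨k, hkn, rfl⟩)))
    have t4 : ((n + 1 + k : ℕ), (none : Option Γ₂), StackOp.pop (1 : Fin 2), (n + 2 + k : ℕ)) ∈
        (natPDA n Γ₂).trans := Or.inr (Or.inr (Or.inr (Or.inl ⟨k, hkn, rfl⟩)))
    have B1 := PDA.Steps.step t4 (rfl : StackOp.apply (.pop 1) ((1 : Fin 2) :: s) s)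
      (PDA.Steps.refl (n + 2 + k, s))
    have B2 := steps_trans run2 B1
    have B3 := PDA.Steps.step t3 (rfl : StackOp.apply (.push 1) s ((1 : Fin 2) :: s)) B2
    have B4 := PDA.Steps.step t2 (rfl : StackOp.apply (.pop 0) ((0 : Fin 2) :: s) s) B3
    have B5 := steps_trans run1 B4
    have B6 := PDA.Steps.step t1 (rfl : StackOp.apply (.push 0) s ((0 : Fin 2) :: s)) B5
    have : (n + 2 + k : ℕ) = n + 1 + (k + 1) := by omega
    rw [this] at B6
    refine steps_congr B6 (by simp) ?_
    simp only [List.length_cons, hs]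
    omega

theorem soundAux (n : ℕ) (Γ₂ : Type) {c d : ℕ × List (Fin 2)} {w : List Γ₂} {h : ℕ}
    (hs : (natPDA n Γ₂).Steps c w d h) :
    d = (2 * n + 1, ([] : List (Fin 2))) →
    ((∀ k s, k ≤ n → c = (k, s) → s.length = n - k →
        w.length = 2 ^ k + rest k s ∧ h ≤ n) ∧
    (∀ k s, k ≤ n → c = (n + 1 + k, s) → s.length = n - k →
        w.length = rest k s ∧ h ≤ n) ∧
    (∀ k s, k < n → c = (2 * n + 2 + k, s) → s.length = n - (k + 1) →
        w.length = 2 ^ k + rest (k + 1) s ∧ h ≤ n)) := by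
  induction hs with
  | refl c =>
    rintro rfl
    refine ⟨?_, ?_, ?_⟩ <;> intro k s hk hc hlen <;>
      simp only [Prod.mk.injEq] at hc <;> obtain ⟨h1, rfl⟩ := hc
    · omega
    · have : k = n := by omega
      subst this
      exact ⟨rfl, by simp⟩
    · omega
  | @step q q' a op s s' wr cc hh htr ha hrest ih =>
    intro hd
    have IH := ih hd
    rcases htr with ⟨j, hj, heq⟩ | ⟨b, heq⟩ | ⟨j, hj, heq⟩ | ⟨j, hj, heq⟩ | ⟨j, hj, heq⟩ <;>
      simp only [Prod.mk.injEq] at heq <;>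
      obtain ⟨rfl, rfl, rfl, rfl⟩ := heq <;>
      simp only [StackOp.apply] at ha <;>
      subst ha
    · -- S (q'+1) --push 0--> S q'
      refine ⟨?_, ?_, ?_⟩ <;> intro k s₀ hk hc hlen <;>
        simp only [Prod.mk.injEq] at hc <;> obtain ⟨h1, rfl⟩ := hc
      · subst h1
        have hIH := IH.1 q' ((0 : Fin 2) :: s) (by omega) rfl
          (by simp only [List.length_cons, hlen]; omega)
        have hr : rest q' ((0 : Fin 2) :: s) = 2 ^ q' + rest (q' + 1) s := by simp [rest]
        rw [hr] at hIH
        have hp : (2 : ℕ) ^ (q' + 1) = 2 ^ q' + 2 ^ q' := by rw [pow_succ]; ring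
        constructor
        · simp only [Option.toList_none, List.nil_append]
          omega
        · omega
      · omega
      · omega
    · -- S 0 --read b--> R 0
      refine ⟨?_, ?_, ?_⟩ <;> intro k s₀ hk hc hlen <;>
        simp only [Prod.mk.injEq] at hc <;> obtain ⟨h1, rfl⟩ := hc
      · subst h1
        have hIH := IH.2.1 0 s' (by omega) (by simp) hlen
        constructor
        · simp only [Option.toList_some, List.singleton_append, List.length_cons]
          have : (2 : ℕ) ^ 0 = 1 := pow_zero 2
          omega
        · omega
      · omega
      · omega
    · -- R j --pop 0--> T (j+1)
      refine ⟨?_, ?_, ?_⟩ <;> intro k s₀ hk hc hlen <;>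
        simp only [Prod.mk.injEq] at hc <;> obtain ⟨h1, rfl⟩ := hc
      · omega
      · have hjk : j = k := by omega
        subst hjk
        simp only [List.length_cons] at hlen
        have hIH := IH.2.2 j s' hj rfl (by omega)
        have hr : rest j ((0 : Fin 2) :: s') = 2 ^ j + rest (j + 1) s' := by simp [rest]
        rw [hr]
        constructor
        · simp only [Option.toList_none, List.nil_append]
          omega
        · simp only [List.length_cons]
          omega
      · omega
    · -- R j --pop 1--> R (j+1)
      refine ⟨?_, ?_, ?_⟩ <;> intro k s₀ hk hc hlen <;>
        simp only [Prod.mk.injEq] at hc <;> obtain ⟨h1, rfl⟩ := hc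
      · omega
      · have hjk : j = k := by omega
        subst hjk
        simp only [List.length_cons] at hlen
        have hIH := IH.2.1 (j + 1) s' (by omega)
          (by simp only [Prod.mk.injEq]; exact ⟨by omega, trivial⟩) (by omega)
        have hr : rest j ((1 : Fin 2) :: s') = rest (j + 1) s' := by simp [rest]
        rw [hr]
        constructor
        · simp only [Option.toList_none, List.nil_append]
          omega
        · simp only [List.length_cons]
          omega
      · omega
    · -- T (q'+1) --push 1--> S q'
      refine ⟨?_, ?_, ?_⟩ <;> intro k s₀ hk hc hlen <;>
        simp only [Prod.mk.injEq] at hc <;> obtain ⟨h1, rfl⟩ := hc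
      · omega
      · omega
      · have hqk : q' = k := by omega
        subst hqk
        have hIH := IH.1 q' ((1 : Fin 2) :: s) (by omega) rfl
          (by simp only [List.length_cons, hlen]; omega)
        have hr : rest q' ((1 : Fin 2) :: s) = rest (q' + 1) s := by simp [rest]
        rw [hr] at hIH
        constructor
        · simp only [Option.toList_none, List.nil_append]
          omega
        · omega

def finPDA (n : ℕ) (Γ₂ : Type) : PDA (Fin (3 * n + 2)) (Fin 2) Γ₂ where
  trans := {t | ((t.1 : ℕ), t.2.1, t.2.2.1, (t.2.2.2 : ℕ)) ∈ (natPDA n Γ₂).trans}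
  start := ⟨n, by omega⟩
  final := {f | (f : ℕ) = 2 * n + 1}

theorem fin_ht (n : ℕ) (Γ₂ : Type) :
    ∀ t : Fin (3 * n + 2) × Option Γ₂ × StackOp (Fin 2) × Fin (3 * n + 2),
      t ∈ (finPDA n Γ₂).trans ↔
        ((fun q : Fin (3 * n + 2) => (q : ℕ)) t.1, t.2.1, t.2.2.1,
          (fun q : Fin (3 * n + 2) => (q : ℕ)) t.2.2.2) ∈ (natPDA n Γ₂).trans :=
  fun _ => Iff.rfl

theorem fin_hsurj (n : ℕ) (Γ₂ : Type) :
    ∀ t ∈ (natPDA n Γ₂).trans, ∃ q : Fin (3 * n + 2),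
      (fun q : Fin (3 * n + 2) => (q : ℕ)) q = t.2.2.2 := by
  rintro t (⟨k, hk, rfl⟩ | ⟨a, rfl⟩ | ⟨k, hk, rfl⟩ | ⟨k, hk, rfl⟩ | ⟨k, hk, rfl⟩)
  · exact ⟨⟨k, by omega⟩, rfl⟩
  · exact ⟨⟨n + 1, by omega⟩, rfl⟩
  · exact ⟨⟨2 * n + 2 + k, by omega⟩, rfl⟩
  · exact ⟨⟨n + 2 + k, by omega⟩, rfl⟩
  · exact ⟨⟨k, by omega⟩, rfl⟩

end CountingPDA


/-- for every `n ≥ 1` there is a PDA with `3n+2` states and two stack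
symbols accepting exactly the words of length `2^n` over the input alphabet `Γ₂`,
and along any accepting run the stack height never exceeds `n`. -/
theorem exists_pda_counting_exp (n : ℕ) (hn : 1 ≤ n) (Γ₂ : Type) :
    ∃ P : PDA (Fin (3 * n + 2)) (Fin 2) Γ₂,
      P.language = {w : List Γ₂ | w.length = 2 ^ n} ∧
      ∀ (w : List Γ₂) (f : Fin (3 * n + 2)) (h : ℕ),
        f ∈ P.final → P.Steps (P.start, []) w (f, []) h → h ≤ n := by
  classical
  refine ⟨CountingPDA.finPDA n Γ₂, ?_, ?_⟩
  · ext w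
    simp only [PDA.language, Set.mem_setOf_eq]
    constructor
    · rintro ⟨f, hf, h, hs⟩
      have hf' : (f : ℕ) = 2 * n + 1 := hf
      have hmap := CountingPDA.comap_steps (CountingPDA.fin_ht n Γ₂) hs
      simp only at hmap
      rw [hf'] at hmap
      have hres := (CountingPDA.soundAux n Γ₂ hmap rfl).1 n [] le_rfl rfl (by simp)
      simpa [CountingPDA.rest] using hres.1
    · intro hw
      have run := CountingPDA.complete n Γ₂ n le_rfl [] (by simp) w hw
      obtain ⟨f, hfv, hsteps⟩ := CountingPDA.comap_steps_back (CountingPDA.fin_ht n Γ₂)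
        (CountingPDA.fin_hsurj n Γ₂) run ((CountingPDA.finPDA n Γ₂).start) rfl
      refine ⟨f, ?_, n, hsteps⟩
      show (f : ℕ) = 2 * n + 1
      simp only at hfv
      omega
  · intro w f h hf hs
    have hf' : (f : ℕ) = 2 * n + 1 := hf
    have hmap := CountingPDA.comap_steps (CountingPDA.fin_ht n Γ₂) hs
    simp only at hmap
    rw [hf'] at hmap
    exact ((CountingPDA.soundAux n Γ₂ hmap rfl).1 n [] le_rfl rfl (by simp)).2
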